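/- arXiv:2012.10713 — 5 statements merged into one kernel-verified Lean document; each statement's English description precedes it below -/
import Mathlib

section
/- Let y, a be nonzero vectors in ℝ^d and Σ a positive definite matrix. Consider the semidefinite program: maximize ⟨y, V y⟩ over symmetric matrices V subject to 0 ⪯ V ⪯ Σ and ⟨a, V a⟩ = 0. Its optimal value equals ⟨y, Σ y⟩ − ⟨a, Σ y⟩² / ⟨a, Σ a⟩. -/
open Matrix

private lemma herm_tr {d : ℕ} {M : Matrix (Fin d) (Fin d) ℝ} (hM : M.IsHermitian) :
    Mᵀ = M := by
  ext i j
  have := congrFun (congrFun hM i) j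
  simpa [conjTranspose_apply] using this

private lemma sym_dot {d : ℕ} {M : Matrix (Fin d) (Fin d) ℝ} (hH : Mᵀ = M)
    (x z : Fin d → ℝ) : z ⬝ᵥ M.mulVec x = x ⬝ᵥ M.mulVec z := by
  calc z ⬝ᵥ M.mulVec x = z ⬝ᵥ Mᵀ.mulVec x := by rw [hH]
    _ = z ⬝ᵥ M.vecMul x := by rw [mulVec_transpose]
    _ = M.vecMul x ⬝ᵥ z := dotProduct_comm _ _
    _ = x ⬝ᵥ M.mulVec z := (dotProduct_mulVec x M z).symm

private lemma psd_cs {d : ℕ} {M : Matrix (Fin d) (Fin d) ℝ} (hM : M.PosSemidef)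
    (x z : Fin d → ℝ) :
    (x ⬝ᵥ M.mulVec z) ^ 2 ≤ (x ⬝ᵥ M.mulVec x) * (z ⬝ᵥ M.mulVec z) := by
  have hsym := sym_dot (herm_tr hM.1) x z
  have key : ∀ t : ℝ, 0 ≤ (z ⬝ᵥ M.mulVec z) * (t * t)
      + (2 * (x ⬝ᵥ M.mulVec z)) * t + (x ⬝ᵥ M.mulVec x) := by
    intro t
    have h := hM.dotProduct_mulVec_nonneg (x + t • z)
    simp only [mulVec_add, mulVec_smul, dotProduct_add, add_dotProduct,
      dotProduct_smul, smul_dotProduct, smul_eq_mul, star_trivial] at h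
    rw [hsym] at h
    nlinarith [h]
  have hd := discrim_le_zero key
  rw [discrim] at hd
  nlinarith [hd]

private lemma vecMulVec_mulVec' {d : ℕ} (u x : Fin d → ℝ) :
    (vecMulVec u u).mulVec x = (u ⬝ᵥ x) • u := by
  ext i
  simp [mulVec, vecMulVec_apply, dotProduct, Finset.mul_sum, mul_comm, mul_left_comm]

private lemma vecMulVec_self_herm {d : ℕ} (u : Fin d → ℝ) :
    (vecMulVec u u).IsHermitian := by
  ext i j
  simp [vecMulVec_apply, conjTranspose_apply, mul_comm]

private lemma psd_smul {d : ℕ} {M : Matrix (Fin d) (Fin d) ℝ} (hM : M.PosSemidef)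
    {r : ℝ} (hr : 0 ≤ r) : (r • M).PosSemidef := by
  refine PosSemidef.of_dotProduct_mulVec_nonneg ?_ ?_
  · ext i j
    have := congrFun (congrFun (hM.1 : Mᴴ = M) i) j
    simp only [conjTranspose_apply, Matrix.smul_apply, smul_eq_mul, star_trivial] at *
    rw [this]
  · intro x
    simp only [smul_mulVec, dotProduct_smul, smul_eq_mul, star_trivial]
    exact mul_nonneg hr (by simpa using hM.dotProduct_mulVec_nonneg x)

/-- SDP: maximize `⟨y, V y⟩` subject to `0 ⪯ V ⪯ Σ` and `⟨a, V a⟩ = 0`.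
The optimal value is `⟨y, Σ y⟩ − ⟨a, Σ y⟩²/⟨a, Σ a⟩`. -/
theorem sdp_max_var_under_invariance {d : ℕ} (y a : Fin d → ℝ)
    (hy : y ≠ 0) (ha : a ≠ 0)
    (S : Matrix (Fin d) (Fin d) ℝ) (hS : S.PosDef) :
    IsGreatest
      {x : ℝ | ∃ V : Matrix (Fin d) (Fin d) ℝ,
        V.PosSemidef ∧ (S - V).PosSemidef ∧ a ⬝ᵥ V.mulVec a = 0 ∧
        x = y ⬝ᵥ V.mulVec y}
      (y ⬝ᵥ S.mulVec y - (a ⬝ᵥ S.mulVec y) ^ 2 / (a ⬝ᵥ S.mulVec a)) := by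
  set c : ℝ := a ⬝ᵥ S.mulVec a with hc
  have hcpos : 0 < c := by
    have h := hS.dotProduct_mulVec_pos ha; rwa [star_trivial] at h
  have hSsym : Sᵀ = S := hS.1
  set u : Fin d → ℝ := S.mulVec a with hu
  have hux : ∀ x : Fin d → ℝ, u ⬝ᵥ x = a ⬝ᵥ S.mulVec x := by
    intro x
    rw [hu, dotProduct_comm]
    exact (sym_dot hSsym x a).symm
  constructor
  · -- membership: V₀ = S - c⁻¹ • u uᵀ
    refine ⟨S - c⁻¹ • vecMulVec u u, PosSemidef.of_dotProduct_mulVec_nonneg ?_ ?_, ?_, ?_, ?_⟩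
    · exact (hS.1.sub (psd_smul (PosSemidef.of_dotProduct_mulVec_nonneg (vecMulVec_self_herm u) fun x => by
        rw [star_trivial, vecMulVec_mulVec', dotProduct_smul, smul_eq_mul,
          dotProduct_comm]; nlinarith [sq_nonneg (u ⬝ᵥ x)])
        (inv_nonneg.mpr hcpos.le)).1)
    · intro x
      have hcs := psd_cs hS.posSemidef a x
      simp only [star_trivial, sub_mulVec, dotProduct_sub, smul_mulVec,
        dotProduct_smul, vecMulVec_mulVec', smul_eq_mul]
      rw [dotProduct_comm x u, hux x]
      have key : c⁻¹ * ((a ⬝ᵥ S.mulVec x) * (a ⬝ᵥ S.mulVec x)) ≤ x ⬝ᵥ S.mulVec x := by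
        rw [inv_mul_le_iff₀ hcpos]
        nlinarith [hcs]
      linarith [key]
    · have : S - (S - c⁻¹ • vecMulVec u u) = c⁻¹ • vecMulVec u u := sub_sub_cancel _ _
      rw [this]
      exact psd_smul (PosSemidef.of_dotProduct_mulVec_nonneg (vecMulVec_self_herm u) fun x => by
        rw [star_trivial, vecMulVec_mulVec', dotProduct_smul, smul_eq_mul,
          dotProduct_comm]; nlinarith [sq_nonneg (u ⬝ᵥ x)]) (inv_nonneg.mpr hcpos.le)
    · simp only [sub_mulVec, dotProduct_sub, smul_mulVec, dotProduct_smul,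
        vecMulVec_mulVec', smul_eq_mul]
      rw [dotProduct_comm a u, hux a, ← hc]
      field_simp
      ring
    · simp only [sub_mulVec, dotProduct_sub, smul_mulVec, dotProduct_smul,
        vecMulVec_mulVec', smul_eq_mul]
      rw [dotProduct_comm y u, hux y]
      have hc0 : c ≠ 0 := hcpos.ne'
      field_simp
  · -- upper bound
    rintro x ⟨V, hV, hSV, haVa, rfl⟩
    have hVa : V.mulVec a = 0 := (hV.dotProduct_mulVec_zero_iff a).mp (by simpa using haVa)
    have haVy : a ⬝ᵥ V.mulVec y = 0 := by
      rw [sym_dot (herm_tr hV.1) y a, hVa, dotProduct_zero]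
    have hcs := psd_cs hSV a y
    simp only [sub_mulVec, dotProduct_sub, haVy, haVa, sub_zero, ← hc] at hcs
    have key : (a ⬝ᵥ S.mulVec y) ^ 2 / c ≤ y ⬝ᵥ S.mulVec y - y ⬝ᵥ V.mulVec y := by
      rw [div_le_iff₀ hcpos]
      nlinarith [hcs]
    linarith [key]
end

section
/- Let y, a be nonzero vectors in ℝ^d and Σ a positive definite matrix. Consider the semidefinite program: minimize ⟨a, V a⟩ over symmetric matrices V subject to 0 ⪯ V ⪯ Σ and ⟨y, V y⟩ = ⟨y, Σ y⟩. Its optimal value equals ⟨a, Σ y⟩² / ⟨y, Σ y⟩. -/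
open Matrix

lemma psd_symm_aux {d : ℕ} {M : Matrix (Fin d) (Fin d) ℝ} (hM : M.IsHermitian)
    (x z : Fin d → ℝ) : x ⬝ᵥ M *ᵥ z = z ⬝ᵥ M *ᵥ x := by
  have hMt : Mᵀ = M := by simpa using hM.eq
  rw [dotProduct_mulVec, ← mulVec_transpose, hMt, dotProduct_comm]

lemma psd_nonneg_aux {d : ℕ} {M : Matrix (Fin d) (Fin d) ℝ} (hM : M.PosSemidef)
    (x : Fin d → ℝ) : 0 ≤ x ⬝ᵥ M *ᵥ x := by simpa using hM.dotProduct_mulVec_nonneg x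

lemma psd_cs_aux {d : ℕ} {M : Matrix (Fin d) (Fin d) ℝ} (hM : M.PosSemidef) (x z : Fin d → ℝ) :
    (x ⬝ᵥ M *ᵥ z) ^ 2 ≤ (x ⬝ᵥ M *ᵥ x) * (z ⬝ᵥ M *ᵥ z) := by
  have key : ∀ t : ℝ, 0 ≤ (z ⬝ᵥ M *ᵥ z) * (t * t) + (2 * (x ⬝ᵥ M *ᵥ z)) * t + (x ⬝ᵥ M *ᵥ x) := by
    intro t
    have h := psd_nonneg_aux hM (x + t • z)
    have hsymm := psd_symm_aux hM.isHermitian x z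
    simp only [mulVec_add, mulVec_smul, dotProduct_add, add_dotProduct,
      dotProduct_smul, smul_dotProduct, smul_eq_mul] at h
    rw [← hsymm] at h
    nlinarith [h]
  have hd := discrim_le_zero key
  simp only [discrim] at hd
  nlinarith [hd]

lemma vmv_aux {d : ℕ} (c z : Fin d → ℝ) : (vecMulVec c c) *ᵥ z = (c ⬝ᵥ z) • c := by
  funext i
  simp [vecMulVec_apply, mulVec, dotProduct, Finset.sum_mul, Finset.mul_sum]
  exact Finset.sum_congr rfl fun j _ => by ring

lemma vmv_herm_aux {d : ℕ} (t : ℝ) (c : Fin d → ℝ) : (t • vecMulVec c c).IsHermitian := by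
  ext i j; simp [vecMulVec_apply, mul_comm]

lemma vmv_quad_aux {d : ℕ} (t : ℝ) (c x z : Fin d → ℝ) :
    x ⬝ᵥ (t • vecMulVec c c) *ᵥ z = t * ((c ⬝ᵥ x) * (c ⬝ᵥ z)) := by
  rw [smul_mulVec, dotProduct_smul, vmv_aux, dotProduct_smul, smul_eq_mul, smul_eq_mul]
  rw [dotProduct_comm x c]
  ring

/-- SDP: minimize `⟨a, V a⟩` subject to `0 ⪯ V ⪯ Σ` and `⟨y, V y⟩ = ⟨y, Σ y⟩`.
The optimal value is `⟨a, Σ y⟩²/⟨y, Σ y⟩`. -/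
theorem sdp_min_var_under_sufficiency {d : ℕ} (y a : Fin d → ℝ)
    (hy : y ≠ 0) (ha : a ≠ 0)
    (S : Matrix (Fin d) (Fin d) ℝ) (hS : S.PosDef) :
    IsLeast
      {x : ℝ | ∃ V : Matrix (Fin d) (Fin d) ℝ,
        V.PosSemidef ∧ (S - V).PosSemidef ∧ y ⬝ᵥ V.mulVec y = y ⬝ᵥ S.mulVec y ∧
        x = a ⬝ᵥ V.mulVec a}
      ((a ⬝ᵥ S.mulVec y) ^ 2 / (y ⬝ᵥ S.mulVec y)) := by
  have hq : 0 < y ⬝ᵥ S *ᵥ y := by simpa using hS.dotProduct_mulVec_pos hy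
  constructor
  · -- membership: the rank-one matrix attains the value
    refine ⟨(y ⬝ᵥ S *ᵥ y)⁻¹ • vecMulVec (S *ᵥ y) (S *ᵥ y), ?_, ?_, ?_, ?_⟩
    · exact PosSemidef.of_dotProduct_mulVec_nonneg (vmv_herm_aux _ _) fun x => by
        simp only [star_trivial]
        rw [vmv_quad_aux]
        exact mul_nonneg (by positivity) (mul_self_nonneg _)
    · refine PosSemidef.of_dotProduct_mulVec_nonneg ?_ ?_
      · exact IsHermitian.sub hS.isHermitian (vmv_herm_aux _ _)
      · intro x
        simp only [star_trivial, sub_mulVec, dotProduct_sub]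
        rw [vmv_quad_aux]
        have hcx : (S *ᵥ y) ⬝ᵥ x = y ⬝ᵥ S *ᵥ x := by
          rw [dotProduct_comm]
          exact psd_symm_aux hS.isHermitian x y
        rw [hcx]
        have hcs := psd_cs_aux hS.posSemidef y x
        rw [sub_nonneg, inv_mul_le_iff₀ hq, ← sq]
        linarith [hcs]
    · rw [vmv_quad_aux]
      rw [dotProduct_comm (S *ᵥ y) y]
      field_simp
    · rw [vmv_quad_aux]
      rw [dotProduct_comm (S *ᵥ y) a, ← sq]
      field_simp
  · -- lower bound
    rintro x ⟨V, hV, hSV, hyV, rfl⟩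
    have hySVy : y ⬝ᵥ (S - V) *ᵥ y = 0 := by
      simp only [sub_mulVec, dotProduct_sub, hyV]; ring
    have h1 : (a ⬝ᵥ (S - V) *ᵥ y) ^ 2 ≤ (a ⬝ᵥ (S - V) *ᵥ a) * (y ⬝ᵥ (S - V) *ᵥ y) :=
      psd_cs_aux hSV a y
    rw [hySVy, mul_zero] at h1
    have h2 : a ⬝ᵥ (S - V) *ᵥ y = 0 := by nlinarith [sq_nonneg (a ⬝ᵥ (S - V) *ᵥ y)]
    have hVy : a ⬝ᵥ V *ᵥ y = a ⬝ᵥ S *ᵥ y := by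
      simp only [sub_mulVec, dotProduct_sub] at h2
      linarith
    have h3 : (a ⬝ᵥ V *ᵥ y) ^ 2 ≤ (a ⬝ᵥ V *ᵥ a) * (y ⬝ᵥ V *ᵥ y) := psd_cs_aux hV a y
    rw [hVy, hyV] at h3
    rw [div_le_iff₀ hq]
    exact h3
end

section
/- Let f, g : Ω → ℝ be square-integrable random variables and Z any random variable. Then Var E[f|Z] − Var E[g|Z] ≤ ½[ Var f − Var g + √( (Var f + Var g)² − 4 Cov(f,g)² ) ]. -/
open MeasureTheory ProbabilityTheory Real

/-- Variance of the conditional expectation `Var E[f | Z]`. -/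
noncomputable def condVarExp {Ω γ : Type*} [MeasurableSpace Ω] [MeasurableSpace γ]
    (μ : Measure Ω) (f : Ω → ℝ) (Z : Ω → γ) : ℝ :=
  ProbabilityTheory.variance (μ[f | MeasurableSpace.comap Z inferInstance]) μ

/-- Covariance `Cov(f,g)`. -/
noncomputable def cov {Ω : Type*} [MeasurableSpace Ω] (μ : Measure Ω) (f g : Ω → ℝ) : ℝ :=
  ∫ ω, (f ω - ∫ x, f x ∂μ) * (g ω - ∫ x, g x ∂μ) ∂μ

section Aux

variable {Ω : Type*} {m m0 : MeasurableSpace Ω} {μ : Measure Ω}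

/-- Product of two L² functions is integrable. -/
lemma aux_integrable_mul {u v : Ω → ℝ} (hu : MemLp u 2 μ) (hv : MemLp v 2 μ) :
    Integrable (fun ω => u ω * v ω) μ := by
  have hb : ∀ᵐ ω ∂μ, ‖u ω * v ω‖ ≤ (u ω ^ 2 + v ω ^ 2) / 2 := by
    filter_upwards with ω
    rw [Real.norm_eq_abs, abs_mul]
    nlinarith [sq_nonneg (|u ω| - |v ω|), sq_abs (u ω), sq_abs (v ω), abs_nonneg (u ω),
      abs_nonneg (v ω)]
  exact Integrable.mono' ((hu.integrable_sq.add hv.integrable_sq).div_const 2)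
    (hu.aestronglyMeasurable.mul hv.aestronglyMeasurable) hb

/-- Cauchy–Schwarz for integrals of L² functions. -/
lemma aux_cauchy_schwarz {u v : Ω → ℝ} (hu : MemLp u 2 μ) (hv : MemLp v 2 μ) :
    (∫ ω, u ω * v ω ∂μ) ^ 2 ≤ (∫ ω, u ω ^ 2 ∂μ) * (∫ ω, v ω ^ 2 ∂μ) := by
  set U : Lp ℝ 2 μ := hu.toLp u
  set V : Lp ℝ 2 μ := hv.toLp v
  have hUu : (U : Ω → ℝ) =ᵐ[μ] u := hu.coeFn_toLp
  have hVv : (V : Ω → ℝ) =ᵐ[μ] v := hv.coeFn_toLp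
  have hUV : (inner ℝ U V : ℝ) = ∫ ω, u ω * v ω ∂μ := by
    rw [L2.inner_def]
    refine integral_congr_ae ?_
    filter_upwards [hUu, hVv] with ω h1 h2
    simp [h1, h2, RCLike.inner_apply, mul_comm]
  have hUU : (inner ℝ U U : ℝ) = ∫ ω, u ω ^ 2 ∂μ := by
    rw [L2.inner_def]
    refine integral_congr_ae ?_
    filter_upwards [hUu] with ω h1
    simp [h1, RCLike.inner_apply, sq]
  have hVV : (inner ℝ V V : ℝ) = ∫ ω, v ω ^ 2 ∂μ := by
    rw [L2.inner_def]
    refine integral_congr_ae ?_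
    filter_upwards [hVv] with ω h1
    simp [h1, RCLike.inner_apply, sq]
  have := real_inner_mul_inner_self_le U V
  rw [hUV, hUU, hVV] at this
  nlinarith [this]

/-- The conditional expectation of an L² function is L². -/
lemma aux_memℒp_condexp (hm : m ≤ m0) [IsFiniteMeasure μ] {f : Ω → ℝ}
    (hf : MemLp f 2 μ) : MemLp (μ[f|m]) 2 μ := by
  set F : Lp ℝ 2 μ := hf.toLp f with hF
  set G : Lp ℝ 2 μ := ↑(condExpL2 ℝ ℝ hm F) with hG
  have hGm : AEStronglyMeasurable[m] (G : Ω → ℝ) μ := aestronglyMeasurable_condExpL2 hm F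
  have heq : (G : Ω → ℝ) =ᵐ[μ] μ[f|m] := by
    refine ae_eq_condExp_of_forall_setIntegral_eq hm (hf.integrable one_le_two)
      (fun s _ _ => integrableOn_Lp_of_measure_ne_top G one_le_two (measure_ne_top μ s))
      (fun s hs hμs => ?_) hGm
    rw [show ∫ x in s, (G : Ω → ℝ) x ∂μ = ∫ x in s, (F : Ω → ℝ) x ∂μ from
      integral_condExpL2_eq hm F hs hμs.ne]
    exact setIntegral_congr_ae (hm s hs) (hf.coeFn_toLp.mono fun x hx _ => hx)
  exact (Lp.memLp G).ae_eq heq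

/-- Orthogonality of the conditional-expectation residual against `m`-measurable L² functions. -/
lemma aux_orth (hm : m ≤ m0) [IsFiniteMeasure μ] {f h : Ω → ℝ}
    (hf : MemLp f 2 μ) (hhm : StronglyMeasurable[m] h) (hh2 : MemLp h 2 μ) :
    ∫ ω, h ω * f ω ∂μ = ∫ ω, h ω * (μ[f|m]) ω ∂μ := by
  have hint : Integrable (h * f) μ := aux_integrable_mul hh2 hf
  have hmul := condExp_mul_of_stronglyMeasurable_left (μ := μ) hhm hint (hf.integrable one_le_two)
  calc ∫ ω, h ω * f ω ∂μ = ∫ ω, (h * f) ω ∂μ := rfl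
    _ = ∫ ω, (μ[h * f|m]) ω ∂μ := (integral_condExp hm).symm
    _ = ∫ ω, (h * μ[f|m]) ω ∂μ := integral_congr_ae hmul
    _ = ∫ ω, h ω * (μ[f|m]) ω ∂μ := rfl

/-- Algebraic core of the bound. -/
lemma aux_alg (a b A B c d : ℝ) (ha : 0 ≤ a) (hb : 0 ≤ b) (hA : 0 ≤ A) (hB : 0 ≤ B)
    (hc : c ^ 2 ≤ a * b) (hd : d ^ 2 ≤ A * B) :
    a - b ≤ (1 / 2) * ((a + A) - (b + B)
      + Real.sqrt (((a + A) + (b + B)) ^ 2 - 4 * (c + d) ^ 2)) := by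
  have hkey : (c + d) ^ 2 ≤ (a + B) * (b + A) := by
    nlinarith [sq_nonneg (a * A - b * B), sq_nonneg (a * A + b * B),
      mul_nonneg (sub_nonneg.2 hc) (sub_nonneg.2 hd), sq_nonneg (c + d), sq_nonneg (c - d),
      mul_nonneg (mul_nonneg ha hA) (mul_nonneg hb hB), sq_nonneg (c * d),
      mul_nonneg ha hb, mul_nonneg hA hB, mul_nonneg ha hA, mul_nonneg hb hB]
  set T : ℝ := (a + B) - (b + A) with hT
  set S : ℝ := ((a + A) + (b + B)) ^ 2 - 4 * (c + d) ^ 2 with hS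
  have hTS : T ≤ Real.sqrt S := by
    rcases le_or_gt T 0 with h0 | h0
    · exact h0.trans (Real.sqrt_nonneg S)
    · have hT2 : T ^ 2 ≤ S := by nlinarith [hkey]
      have hS0 : 0 ≤ S := le_trans (sq_nonneg T) hT2
      exact (Real.le_sqrt h0.le hS0).2 hT2
  nlinarith [hTS]


/-- Main estimate in the case `m ≤ m0`. -/
lemma aux_main (hm : m ≤ m0) [IsProbabilityMeasure μ] {f g : Ω → ℝ}
    (hf : MemLp f 2 μ) (hg : MemLp g 2 μ) :
    variance (μ[f|m]) μ - variance (μ[g|m]) μ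
      ≤ (1 / 2) * (variance f μ - variance g μ
          + Real.sqrt ((variance f μ + variance g μ) ^ 2 - 4 * (cov μ f g) ^ 2)) := by
  set mf : ℝ := ∫ x, f x ∂μ with hmf
  set mg : ℝ := ∫ x, g x ∂μ with hmg
  set f0 : Ω → ℝ := fun ω => f ω - mf with hf0
  set g0 : Ω → ℝ := fun ω => g ω - mg with hg0
  have hVf : variance f μ = ∫ ω, f0 ω ^ 2 ∂μ := by rw [(variance_eq_integral hf.aemeasurable)]
  have hVg : variance g μ = ∫ ω, g0 ω ^ 2 ∂μ := by rw [(variance_eq_integral hg.aemeasurable)]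
  have hcov : cov μ f g = ∫ ω, f0 ω * g0 ω ∂μ := rfl
  set fe : Ω → ℝ := μ[f|m] with hfe
  set ge : Ω → ℝ := μ[g|m] with hge
  have hfeL : MemLp fe 2 μ := aux_memℒp_condexp hm hf
  have hgeL : MemLp ge 2 μ := aux_memℒp_condexp hm hg
  have hmfe : ∫ x, fe x ∂μ = mf := integral_condExp hm
  have hmge : ∫ x, ge x ∂μ = mg := integral_condExp hm
  set fe0 : Ω → ℝ := fun ω => fe ω - mf with hfe0
  set ge0 : Ω → ℝ := fun ω => ge ω - mg with hge0
  set F : Ω → ℝ := fun ω => f ω - fe ω with hFdef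
  set G : Ω → ℝ := fun ω => g ω - ge ω with hGdef
  have hfe0L : MemLp fe0 2 μ := hfeL.sub (memLp_const mf)
  have hge0L : MemLp ge0 2 μ := hgeL.sub (memLp_const mg)
  have hFL : MemLp F 2 μ := hf.sub hfeL
  have hGL : MemLp G 2 μ := hg.sub hgeL
  have hfe0m : StronglyMeasurable[m] fe0 :=
    stronglyMeasurable_condExp.sub stronglyMeasurable_const
  have hge0m : StronglyMeasurable[m] ge0 :=
    stronglyMeasurable_condExp.sub stronglyMeasurable_const
  -- orthogonality relations
  have horth : ∀ (h : Ω → ℝ), StronglyMeasurable[m] h → MemLp h 2 μ →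
      ∀ (u ue : Ω → ℝ), MemLp u 2 μ → ue = μ[u|m] →
      ∫ ω, h ω * (u ω - ue ω) ∂μ = 0 := by
    intro h hhm hh2 u ue hu hue
    have h1 : ∫ ω, h ω * u ω ∂μ = ∫ ω, h ω * ue ω ∂μ := by
      rw [hue]; exact aux_orth hm hu hhm hh2
    have h2 : Integrable (fun ω => h ω * u ω) μ := aux_integrable_mul hh2 hu
    have h3 : Integrable (fun ω => h ω * ue ω) μ := by
      rw [hue]; exact aux_integrable_mul hh2 (aux_memℒp_condexp hm hu)
    have h4 : ∫ ω, (h ω * u ω - h ω * ue ω) ∂μ = 0 := by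
      rw [integral_sub h2 h3, h1, sub_self]
    rw [← h4]
    congr 1; funext ω; ring
  have horthFfe : ∫ ω, fe0 ω * F ω ∂μ = 0 := horth fe0 hfe0m hfe0L f fe hf rfl
  have horthGge : ∫ ω, ge0 ω * G ω ∂μ = 0 := horth ge0 hge0m hge0L g ge hg rfl
  have horthGfe : ∫ ω, fe0 ω * G ω ∂μ = 0 := horth fe0 hfe0m hfe0L g ge hg rfl
  have horthFge : ∫ ω, ge0 ω * F ω ∂μ = 0 := horth ge0 hge0m hge0L f fe hf rfl
  -- quantities
  set a : ℝ := ∫ ω, fe0 ω ^ 2 ∂μ with ha'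
  set b : ℝ := ∫ ω, ge0 ω ^ 2 ∂μ with hb'
  set A : ℝ := ∫ ω, F ω ^ 2 ∂μ with hA'
  set B : ℝ := ∫ ω, G ω ^ 2 ∂μ with hB'
  set c : ℝ := ∫ ω, fe0 ω * ge0 ω ∂μ with hc'
  set d : ℝ := ∫ ω, F ω * G ω ∂μ with hd'
  have ha0 : 0 ≤ a := integral_nonneg fun ω => sq_nonneg _
  have hb0 : 0 ≤ b := integral_nonneg fun ω => sq_nonneg _
  have hA0 : 0 ≤ A := integral_nonneg fun ω => sq_nonneg _
  have hB0 : 0 ≤ B := integral_nonneg fun ω => sq_nonneg _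
  have hcs1 : c ^ 2 ≤ a * b := aux_cauchy_schwarz hfe0L hge0L
  have hcs2 : d ^ 2 ≤ A * B := aux_cauchy_schwarz hFL hGL
  -- decompositions
  have hsplit : ∀ ω, f0 ω = fe0 ω + F ω := fun ω => by simp only [hf0, hfe0, hFdef]; ring
  have hsplitg : ∀ ω, g0 ω = ge0 ω + G ω := fun ω => by simp only [hg0, hge0, hGdef]; ring
  have hVfd : variance f μ = a + A := by
    rw [hVf]
    have hpt : ∀ ω, f0 ω ^ 2 = fe0 ω ^ 2 + (2 * (fe0 ω * F ω) + F ω ^ 2) := by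
      intro ω; rw [hsplit ω]; ring
    have i0 : Integrable (fun ω => 2 * (fe0 ω * F ω)) μ :=
      (aux_integrable_mul hfe0L hFL).const_mul 2
    have i1 : Integrable (fun ω => 2 * (fe0 ω * F ω) + F ω ^ 2) μ := i0.add hFL.integrable_sq
    have e1 : ∫ ω, (fe0 ω ^ 2 + (2 * (fe0 ω * F ω) + F ω ^ 2)) ∂μ
        = (∫ ω, fe0 ω ^ 2 ∂μ) + ∫ ω, (2 * (fe0 ω * F ω) + F ω ^ 2) ∂μ :=
      integral_add hfe0L.integrable_sq i1
    have e2 : ∫ ω, (2 * (fe0 ω * F ω) + F ω ^ 2) ∂μ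
        = (∫ ω, 2 * (fe0 ω * F ω) ∂μ) + ∫ ω, F ω ^ 2 ∂μ :=
      integral_add i0 hFL.integrable_sq
    have e3 : ∫ ω, 2 * (fe0 ω * F ω) ∂μ = 2 * ∫ ω, fe0 ω * F ω ∂μ := integral_const_mul 2 _
    rw [integral_congr_ae (Filter.Eventually.of_forall hpt), e1, e2, e3, horthFfe]
    ring
  have hVgd : variance g μ = b + B := by
    rw [hVg]
    have hpt : ∀ ω, g0 ω ^ 2 = ge0 ω ^ 2 + (2 * (ge0 ω * G ω) + G ω ^ 2) := by
      intro ω; rw [hsplitg ω]; ring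
    have i0 : Integrable (fun ω => 2 * (ge0 ω * G ω)) μ :=
      (aux_integrable_mul hge0L hGL).const_mul 2
    have i1 : Integrable (fun ω => 2 * (ge0 ω * G ω) + G ω ^ 2) μ := i0.add hGL.integrable_sq
    have e1 : ∫ ω, (ge0 ω ^ 2 + (2 * (ge0 ω * G ω) + G ω ^ 2)) ∂μ
        = (∫ ω, ge0 ω ^ 2 ∂μ) + ∫ ω, (2 * (ge0 ω * G ω) + G ω ^ 2) ∂μ :=
      integral_add hge0L.integrable_sq i1
    have e2 : ∫ ω, (2 * (ge0 ω * G ω) + G ω ^ 2) ∂μ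
        = (∫ ω, 2 * (ge0 ω * G ω) ∂μ) + ∫ ω, G ω ^ 2 ∂μ :=
      integral_add i0 hGL.integrable_sq
    have e3 : ∫ ω, 2 * (ge0 ω * G ω) ∂μ = 2 * ∫ ω, ge0 ω * G ω ∂μ := integral_const_mul 2 _
    rw [integral_congr_ae (Filter.Eventually.of_forall hpt), e1, e2, e3, horthGge]
    ring
  have hcovd : cov μ f g = c + d := by
    rw [hcov]
    have hpt : ∀ ω, f0 ω * g0 ω
        = fe0 ω * ge0 ω + (fe0 ω * G ω + (ge0 ω * F ω + F ω * G ω)) := by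
      intro ω; rw [hsplit ω, hsplitg ω]; ring
    have j1 : Integrable (fun ω => ge0 ω * F ω + F ω * G ω) μ :=
      (aux_integrable_mul hge0L hFL).add (aux_integrable_mul hFL hGL)
    have j2 : Integrable (fun ω => fe0 ω * G ω + (ge0 ω * F ω + F ω * G ω)) μ :=
      (aux_integrable_mul hfe0L hGL).add j1
    have e1 : ∫ ω, (fe0 ω * ge0 ω + (fe0 ω * G ω + (ge0 ω * F ω + F ω * G ω))) ∂μ
        = (∫ ω, fe0 ω * ge0 ω ∂μ)
          + ∫ ω, (fe0 ω * G ω + (ge0 ω * F ω + F ω * G ω)) ∂μ :=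
      integral_add (aux_integrable_mul hfe0L hge0L) j2
    have e2 : ∫ ω, (fe0 ω * G ω + (ge0 ω * F ω + F ω * G ω)) ∂μ
        = (∫ ω, fe0 ω * G ω ∂μ) + ∫ ω, (ge0 ω * F ω + F ω * G ω) ∂μ :=
      integral_add (aux_integrable_mul hfe0L hGL) j1
    have e3 : ∫ ω, (ge0 ω * F ω + F ω * G ω) ∂μ
        = (∫ ω, ge0 ω * F ω ∂μ) + ∫ ω, F ω * G ω ∂μ :=
      integral_add (aux_integrable_mul hge0L hFL) (aux_integrable_mul hFL hGL)
    rw [integral_congr_ae (Filter.Eventually.of_forall hpt), e1, e2, e3, horthGfe, horthFge]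
    ring
  have hcva : variance fe μ = a := by
    rw [(variance_eq_integral hfeL.aemeasurable), hmfe, ha']
  have hcvb : variance ge μ = b := by
    rw [(variance_eq_integral hgeL.aemeasurable), hmge, hb']
  rw [hcva, hcvb, hVfd, hVgd, hcovd]
  exact aux_alg a b A B c d ha0 hb0 hA0 hB0 hcs1 hcs2

end Aux

/-- Upper bound:
`Var E[f|Z] − Var E[g|Z] ≤ ½[Var f − Var g + √((Var f + Var g)² − 4Cov(f,g)²)]`. -/
theorem condVarExp_sub_upper_bound
    {Ω γ : Type*} [MeasurableSpace Ω] [MeasurableSpace γ]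
    (μ : Measure Ω) [IsProbabilityMeasure μ]
    (f g : Ω → ℝ) (hf : MemLp f 2 μ) (hg : MemLp g 2 μ) (Z : Ω → γ) :
    condVarExp μ f Z - condVarExp μ g Z
      ≤ (1 / 2) * (variance f μ - variance g μ
          + Real.sqrt ((variance f μ + variance g μ) ^ 2 - 4 * (cov μ f g) ^ 2)) := by
  by_cases hm : MeasurableSpace.comap Z inferInstance ≤ ‹MeasurableSpace Ω›
  · simpa only [condVarExp] using aux_main hm hf hg
  · have hzf : μ[f|MeasurableSpace.comap Z inferInstance] = 0 := condExp_of_not_le hm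
    have hzg : μ[g|MeasurableSpace.comap Z inferInstance] = 0 := condExp_of_not_le hm
    have hcva : condVarExp μ f Z = 0 := by
      rw [condVarExp, hzf]; simp [variance, evariance_zero]
    have hcvb : condVarExp μ g Z = 0 := by
      rw [condVarExp, hzg]; simp [variance, evariance_zero]
    have hVf : variance f μ = ∫ ω, (f ω - ∫ x, f x ∂μ) ^ 2 ∂μ := by
      rw [(variance_eq_integral hf.aemeasurable)]
    have hVg : variance g μ = ∫ ω, (g ω - ∫ x, g x ∂μ) ^ 2 ∂μ := by
      rw [(variance_eq_integral hg.aemeasurable)]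
    have hcs : (cov μ f g) ^ 2 ≤ variance f μ * variance g μ := by
      rw [hVf, hVg]
      exact aux_cauchy_schwarz (hf.sub (memLp_const _)) (hg.sub (memLp_const _))
    have halg := aux_alg 0 0 (variance f μ) (variance g μ) 0 (cov μ f g)
      le_rfl le_rfl (variance_nonneg f μ) (variance_nonneg g μ) (by norm_num) hcs
    simpa [hcva, hcvb] using halg
end

section
/- Let f, g be square-integrable random variables with Var g > 0, and let Z be a random variable such that Var E[g|Z] = Var g. Then Var E[f|Z] ≥ Cov(f,g)²/Var g. -/
open MeasureTheory ProbabilityTheory Real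

/-- Cauchy–Schwarz for integrals of products of L² functions. -/
lemma integral_mul_sq_le' {Ω : Type*} [MeasurableSpace Ω] {μ : Measure Ω}
    {u v : Ω → ℝ} (hu : MemLp u 2 μ) (hv : MemLp v 2 μ) :
    (∫ x, u x * v x ∂μ) ^ 2 ≤ (∫ x, u x ^ 2 ∂μ) * (∫ x, v x ^ 2 ∂μ) := by
  have hU := hu.coeFn_toLp
  have hV := hv.coeFn_toLp
  set U : Lp ℝ 2 μ := hu.toLp u
  set V : Lp ℝ 2 μ := hv.toLp v
  have h := real_inner_mul_inner_self_le U V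
  have hUV : (inner ℝ U V : ℝ) = ∫ x, u x * v x ∂μ := by
    rw [MeasureTheory.L2.inner_def]
    refine integral_congr_ae ?_
    filter_upwards [hU, hV] with x hx hy
    simp [hx, hy, RCLike.inner_apply, mul_comm]
  have hUU : (inner ℝ U U : ℝ) = ∫ x, u x ^ 2 ∂μ := by
    rw [MeasureTheory.L2.inner_def]
    refine integral_congr_ae ?_
    filter_upwards [hU] with x hx
    simp [hx, RCLike.inner_apply, sq]
  have hVV : (inner ℝ V V : ℝ) = ∫ x, v x ^ 2 ∂μ := by
    rw [MeasureTheory.L2.inner_def]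
    refine integral_congr_ae ?_
    filter_upwards [hV] with x hx
    simp [hx, RCLike.inner_apply, sq]
  rw [hUV, hUU, hVV] at h
  nlinarith [h]

/-- The product of two L² functions is integrable. -/
lemma integrable_mul₂ {Ω : Type*} [MeasurableSpace Ω] {μ : Measure Ω}
    {u v : Ω → ℝ} (hu : MemLp u 2 μ) (hv : MemLp v 2 μ) :
    Integrable (fun x => u x * v x) μ := by
  have h := hv.smul hu (r := 1) (hpqr := ⟨
    (by simp only [one_div, inv_one, ENNReal.inv_two_add_inv_two])⟩)
  rw [memLp_one_iff_integrable] at h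
  exact h

/-- Conditional expectation of an L² function is L². -/
lemma memℒp_two_condexp' {Ω : Type*} {m m0 : MeasurableSpace Ω} {μ : Measure Ω}
    [IsProbabilityMeasure μ] (hm : m ≤ m0) {f : Ω → ℝ} (hf : MemLp f 2 μ) :
    MemLp (μ[f|m]) 2 μ := by
  have hG : (condExpL2 ℝ ℝ hm (hf.toLp f) : Ω → ℝ) =ᵐ[μ] μ[f|m] := by
    refine ae_eq_condExp_of_forall_setIntegral_eq hm (hf.integrable one_le_two) ?_ ?_ ?_
    · intro s _ _
      exact (Lp.memLp _).integrable one_le_two |>.integrableOn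
    · intro s hs hμs
      rw [integral_condExpL2_eq hm (hf.toLp f) hs hμs.ne]
      exact setIntegral_congr_ae (hm s hs) (hf.coeFn_toLp.mono fun x hx _ => hx)
    · exact lpMeas.aestronglyMeasurable _
  exact (Lp.memLp _).ae_eq hG

/-- Pull-out property at the level of integrals. -/
lemma integral_mul_condexp' {Ω : Type*} {m m0 : MeasurableSpace Ω} {μ : Measure Ω}
    [IsProbabilityMeasure μ] (hm : m ≤ m0) {φ g : Ω → ℝ}
    (hφ : MemLp φ 2 μ) (hG2 : MemLp (μ[g|m]) 2 μ) :
    ∫ x, φ x * (μ[g|m]) x ∂μ = ∫ x, (μ[φ|m]) x * (μ[g|m]) x ∂μ := by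
  set G := μ[g|m] with hGdef
  have hint : Integrable (G * φ) μ := by
    have h := integrable_mul₂ hG2 hφ
    exact h
  have h1 : μ[G * φ|m] =ᵐ[μ] G * μ[φ|m] :=
    condExp_mul_of_stronglyMeasurable_left stronglyMeasurable_condExp hint (hφ.integrable one_le_two)
  calc ∫ x, φ x * G x ∂μ = ∫ x, (G * φ) x ∂μ := by simp [mul_comm]
    _ = ∫ x, (μ[G * φ|m]) x ∂μ := (integral_condExp hm (f := G * φ)).symm
    _ = ∫ x, (G * μ[φ|m]) x ∂μ := integral_congr_ae h1
    _ = ∫ x, (μ[φ|m]) x * G x ∂μ := by simp [mul_comm]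

/-- Covariance as `E[fg] - E[f]E[g]`. -/
lemma cov_eq' {Ω : Type*} [MeasurableSpace Ω] {μ : Measure Ω} [IsProbabilityMeasure μ]
    {f g : Ω → ℝ} (hf : MemLp f 2 μ) (hg : MemLp g 2 μ) :
    cov μ f g = ∫ x, f x * g x ∂μ - (∫ x, f x ∂μ) * (∫ x, g x ∂μ) := by
  have hfg := integrable_mul₂ hf hg
  have hfi := hf.integrable one_le_two
  have hgi := hg.integrable one_le_two
  have e : ∀ ω, (f ω - ∫ x, f x ∂μ) * (g ω - ∫ x, g x ∂μ)
      = f ω * g ω - (∫ x, f x ∂μ) * g ω - (∫ x, g x ∂μ) * f ω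
        + (∫ x, f x ∂μ) * (∫ x, g x ∂μ) := fun ω => by ring
  rw [cov]
  simp_rw [e]
  rw [integral_add, integral_sub, integral_sub, integral_const_mul, integral_const_mul,
    integral_const]
  · simp [measure_univ]; ring
  · exact hfg
  · exact hgi.const_mul _
  · exact hfg.sub (hgi.const_mul _)
  · exact hfi.const_mul _
  · exact (hfg.sub (hgi.const_mul _)).sub (hfi.const_mul _)
  · exact integrable_const _

/-- Variance as `E[f²] - E[f]²` (explicit form). -/
lemma variance_eq_sub' {Ω : Type*} [MeasurableSpace Ω] {μ : Measure Ω} [IsProbabilityMeasure μ]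
    {f : Ω → ℝ} (hf : MemLp f 2 μ) :
    variance f μ = ∫ x, f x ^ 2 ∂μ - (∫ x, f x ∂μ) ^ 2 := by
  rw [variance_eq_sub hf]
  congr 1

/-- If `Var E[g|Z] = Var g` then `Var E[f|Z] ≥ Cov(f,g)²/Var g`. -/
theorem condVarExp_lower_of_sufficiency
    {Ω γ : Type*} [MeasurableSpace Ω] [MeasurableSpace γ]
    (μ : Measure Ω) [IsProbabilityMeasure μ]
    (f g : Ω → ℝ) (hf : MemLp f 2 μ) (hg : MemLp g 2 μ)
    (hgv : 0 < variance g μ) (Z : Ω → γ)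
    (hZ : condVarExp μ g Z = variance g μ) :
    (cov μ f g) ^ 2 / variance g μ ≤ condVarExp μ f Z := by
  simp only [condVarExp] at hZ ⊢
  by_cases hm : MeasurableSpace.comap Z inferInstance ≤ (inferInstance : MeasurableSpace Ω)
  swap
  · rw [condExp_of_not_le hm, variance_zero] at hZ
    exact absurd hZ.symm hgv.ne'
  haveI : SigmaFinite (μ.trim hm) := inferInstance
  set F := μ[f|MeasurableSpace.comap Z inferInstance] with hFdef
  set G := μ[g|MeasurableSpace.comap Z inferInstance] with hGdef
  have hF2 : MemLp F 2 μ := memℒp_two_condexp' hm hf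
  have hG2 : MemLp G 2 μ := memℒp_two_condexp' hm hg
  have hEF : ∫ x, F x ∂μ = ∫ x, f x ∂μ := integral_condExp hm
  have hEG : ∫ x, G x ∂μ = ∫ x, g x ∂μ := integral_condExp hm
  -- key: ∫ g G = ∫ G G
  have hgg : ∫ x, g x * G x ∂μ = ∫ x, G x * G x ∂μ := integral_mul_condexp' hm hg hG2
  have hfgG : ∫ x, f x * G x ∂μ = ∫ x, F x * G x ∂μ := integral_mul_condexp' hm hf hG2
  -- equality of second moments
  have hVg : variance g μ = ∫ x, g x ^ 2 ∂μ - (∫ x, g x ∂μ) ^ 2 := variance_eq_sub' hg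
  have hVG : variance G μ = ∫ x, G x ^ 2 ∂μ - (∫ x, G x ∂μ) ^ 2 := variance_eq_sub' hG2
  have hsq : ∫ x, G x ^ 2 ∂μ = ∫ x, g x ^ 2 ∂μ := by
    have h := hZ
    rw [hVG, hVg, hEG] at h
    linarith
  -- g = G a.e.
  have hae : g =ᵐ[μ] G := by
    have hint : Integrable (fun x => (g x - G x) ^ 2) μ := by
      have h := (hg.sub hG2).integrable_sq
      simpa [Pi.sub_apply, sq] using h
    have hzero : ∫ x, (g x - G x) ^ 2 ∂μ = 0 := by
      have e : ∀ x, (g x - G x) ^ 2 = g x ^ 2 - 2 * (g x * G x) + G x ^ 2 := fun x => by ring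
      simp_rw [e]
      rw [integral_add, integral_sub, integral_const_mul]
      · rw [hgg, hsq]
        have : ∫ x, G x * G x ∂μ = ∫ x, G x ^ 2 ∂μ := by simp_rw [sq]
        rw [this, hsq]; ring
      · exact hg.integrable_sq
      · exact (integrable_mul₂ hg hG2).const_mul 2
      · exact hg.integrable_sq.sub ((integrable_mul₂ hg hG2).const_mul 2)
      · exact hG2.integrable_sq
    have h0 := (integral_eq_zero_iff_of_nonneg (fun x => sq_nonneg _) hint).mp hzero
    filter_upwards [h0] with x hx
    have : (g x - G x) ^ 2 = 0 := hx
    nlinarith [this]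
  -- cov equality
  have covfg : cov μ f g = cov μ F G := by
    rw [cov_eq' hf hg, cov_eq' hF2 hG2, hEF, hEG]
    have h1 : ∫ x, f x * g x ∂μ = ∫ x, f x * G x ∂μ :=
      integral_congr_ae (hae.mono fun x hx => by dsimp only; rw [hx])
    rw [h1, hfgG]
  -- Cauchy-Schwarz
  have hFc : MemLp (fun x => F x - ∫ y, F y ∂μ) 2 μ := hF2.sub (memLp_const _)
  have hGc : MemLp (fun x => G x - ∫ y, G y ∂μ) 2 μ := hG2.sub (memLp_const _)
  have hcs := integral_mul_sq_le' hFc hGc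
  have hvarF : ∫ x, (F x - ∫ y, F y ∂μ) ^ 2 ∂μ = variance F μ := by
    rw [variance_eq_integral hF2.aemeasurable]
  have hvarG : ∫ x, (G x - ∫ y, G y ∂μ) ^ 2 ∂μ = variance G μ := by
    rw [variance_eq_integral hG2.aemeasurable]
  have hcovFG : ∫ x, (F x - ∫ y, F y ∂μ) * (G x - ∫ y, G y ∂μ) ∂μ = cov μ F G := rfl
  rw [hcovFG, hvarF, hvarG, hZ] at hcs
  rw [div_le_iff₀ hgv, covfg]
  exact hcs
end

section
/- Let Y, A be binary random variables with joint distribution D, and define Δ_{Y|A} = |P(Y=1|A=0) − P(Y=1|A=1)|, with α = P(Y=1|A=0) ≤ β = P(Y=1|A=1). Construct Z ~ Uniform(0,1) independent of A, and define Y' = 1 if (Z ≤ α and A = 0) or (Z ≤ β and A = 1), else Y' = 0. Then (A, Y') has the same joint distribution as (A, Y), Z is independent of A, and H(Y'|Z) = (β − α)·H(A) = Δ_{Y|A}·H(A). -/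
open MeasureTheory ProbabilityTheory Real

/-- Shannon entropy of a random variable with values in a finite alphabet. -/
noncomputable def entropy {Ω α : Type*} [MeasurableSpace Ω] [Fintype α]
    (μ : Measure Ω) (X : Ω → α) : ℝ :=
  ∑ a : α, Real.negMulLog ((μ (X ⁻¹' {a})).toReal)

/-- `Δ_{Y|A} = |P(Y=1|A=0) − P(Y=1|A=1)|` for binary `A, Y`. -/
noncomputable def delta {Ω : Type*} [MeasurableSpace Ω]
    (μ : Measure Ω) (A Y : Ω → Bool) : ℝ :=
  |(μ[|A ⁻¹' {false}] (Y ⁻¹' {true})).toReal - (μ[|A ⁻¹' {true}] (Y ⁻¹' {true})).toReal|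

lemma vol_Ioc_inter (a b : ℝ) (h0 : 0 ≤ a) (h1 : b ≤ 1) :
    volume (Set.Ioc a b ∩ Set.Ioo (0:ℝ) 1) = ENNReal.ofReal (b - a) := by
  have hset : Set.Ioc a b ∩ Set.Ioo (0:ℝ) 1 = Set.Ioc a b \ {1} := by
    ext z
    simp only [Set.mem_inter_iff, Set.mem_Ioc, Set.mem_Ioo, Set.mem_diff,
      Set.mem_singleton_iff]
    constructor
    · rintro ⟨⟨h1z, h2z⟩, _, h4z⟩; exact ⟨⟨h1z, h2z⟩, ne_of_lt h4z⟩
    · rintro ⟨⟨h1z, h2z⟩, hne⟩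
      exact ⟨⟨h1z, h2z⟩, lt_of_le_of_lt h0 h1z, lt_of_le_of_ne (le_trans h2z h1) hne⟩
  rw [hset, measure_diff_null (volume_singleton), Real.volume_Ioc]

lemma measure_inter_eq {Ω : Type*} [MeasurableSpace Ω] (μ : Measure Ω) [IsProbabilityMeasure μ]
    {s : Set Ω} (hs : MeasurableSet s) (hs0 : μ s ≠ 0) (t : Set Ω) :
    μ (s ∩ t) = μ s * ENNReal.ofReal ((μ[|s] t).toReal) := by
  have hfin : μ s ≠ ⊤ := measure_ne_top μ s
  have h1 : μ[|s] t = (μ s)⁻¹ * μ (s ∩ t) := cond_apply hs μ t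
  have h2 : μ[|s] t ≠ ⊤ := by
    rw [h1]; exact ENNReal.mul_ne_top (ENNReal.inv_ne_top.2 hs0) (measure_ne_top μ _)
  rw [ENNReal.ofReal_toReal h2, h1, ← mul_assoc, ENNReal.mul_inv_cancel hs0 hfin, one_mul]

lemma entropy_cond_const {Ω : Type*} [MeasurableSpace Ω] (μ : Measure Ω) [IsFiniteMeasure μ]
    {s : Set Ω} (hs : MeasurableSet s) (f : Ω → Bool) (b : Bool)
    (h : ∀ ω ∈ s, f ω = b) : entropy (μ[|s]) f = 0 := by
  have key : ∀ a : Bool, Real.negMulLog ((μ[|s] (f ⁻¹' {a})).toReal) = 0 := by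
    intro a
    rw [cond_apply hs]
    by_cases hab : a = b
    · subst hab
      have hss : s ∩ f ⁻¹' {a} = s := Set.inter_eq_left.2 (fun ω hω => by simp [h ω hω])
      rw [hss]
      rcases eq_or_ne (μ s) 0 with h0 | h0
      · simp [h0]
      · rw [ENNReal.inv_mul_cancel h0 (measure_ne_top μ s)]; simp
    · have he : s ∩ f ⁻¹' {a} = ∅ := by
        ext ω
        simp only [Set.mem_inter_iff, Set.mem_preimage, Set.mem_singleton_iff,
          Set.mem_empty_iff_false, iff_false, not_and]
        intro hω hf
        exact hab (hf ▸ (h ω hω) ▸ rfl)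
      rw [he]; simp
  unfold entropy
  rw [Fintype.sum_bool, key, key, add_zero]

/-- Achievability construction: with `Z ~ Uniform(0,1)` independent of `A` and
`Y' = 1` iff (`Z ≤ α` and `A = 0`) or (`Z ≤ β` and `A = 1`), the pair `(A, Y')`
has the same joint law as `(A, Y)`, `Z` is independent of `A`, and the conditional
entropy `H(Y'|Z)` (computed over the three regimes `Z ≤ α`, `α < Z ≤ β`, `Z > β`)
equals `(β − α)·H(A) = Δ_{Y|A}·H(A)`. -/
theorem achievability_construction
    {Ω : Type*} [MeasurableSpace Ω] (μ : Measure Ω) [IsProbabilityMeasure μ]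
    (A Y : Ω → Bool) (hAm : Measurable A) (hYm : Measurable Y)
    (hA0 : μ (A ⁻¹' {false}) ≠ 0) (hA1 : μ (A ⁻¹' {true}) ≠ 0)
    (α β : ℝ)
    (hα : α = (μ[|A ⁻¹' {false}] (Y ⁻¹' {true})).toReal)
    (hβ : β = (μ[|A ⁻¹' {true}] (Y ⁻¹' {true})).toReal)
    (hαβ : α ≤ β)
    (μ' : Measure (Ω × ℝ))
    (hμ' : μ' = μ.prod (volume.restrict (Set.Ioo (0 : ℝ) 1)))
    (A' : Ω × ℝ → Bool) (hA' : A' = fun p => A p.1)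
    (Z : Ω × ℝ → ℝ) (hZ : Z = fun p => p.2)
    (Y' : Ω × ℝ → Bool)
    (hY' : Y' = fun p =>
      if (Z p ≤ α ∧ A' p = false) ∨ (Z p ≤ β ∧ A' p = true) then true else false) :
    Measure.map (fun p => (A' p, Y' p)) μ' = Measure.map (fun ω => (A ω, Y ω)) μ ∧
    ProbabilityTheory.IndepFun Z A' μ' ∧
    (μ' {p | Z p ≤ α}).toReal * entropy (μ'[|{p | Z p ≤ α}]) Y'
      + (μ' {p | α < Z p ∧ Z p ≤ β}).toReal * entropy (μ'[|{p | α < Z p ∧ Z p ≤ β}]) Y'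
      + (μ' {p | β < Z p}).toReal * entropy (μ'[|{p | β < Z p}]) Y'
      = (β - α) * entropy μ A ∧
    β - α = delta μ A Y := by
  subst hμ' hA' hZ hY'
  beta_reduce
  haveI hνP : IsProbabilityMeasure (volume.restrict (Set.Ioo (0:ℝ) 1)) := by
    constructor
    rw [Measure.restrict_apply_univ, Real.volume_Ioo]
    norm_num
  have hSf : MeasurableSet (A ⁻¹' {false}) := hAm (measurableSet_singleton _)
  have hSt : MeasurableSet (A ⁻¹' {true}) := hAm (measurableSet_singleton _)
  haveI hPf : IsProbabilityMeasure (μ[|A ⁻¹' {false}]) := cond_isProbabilityMeasure hA0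
  haveI hPt : IsProbabilityMeasure (μ[|A ⁻¹' {true}]) := cond_isProbabilityMeasure hA1
  have hα0 : 0 ≤ α := hα ▸ ENNReal.toReal_nonneg
  have hβ0 : 0 ≤ β := hβ ▸ ENNReal.toReal_nonneg
  have hα1 : α ≤ 1 := by
    rw [hα]
    exact ENNReal.toReal_le_of_le_ofReal one_pos.le (by simpa using prob_le_one)
  have hβ1 : β ≤ 1 := by
    rw [hβ]
    exact ENNReal.toReal_le_of_le_ofReal one_pos.le (by simpa using prob_le_one)
  refine ⟨?_, ?_, ?_, ?_⟩
  · -- equality of joint laws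
    have hY'm : Measurable (fun p : Ω × ℝ =>
        if (p.2 ≤ α ∧ A p.1 = false) ∨ (p.2 ≤ β ∧ A p.1 = true) then true else false) := by
      apply Measurable.ite _ measurable_const measurable_const
      apply MeasurableSet.union
      · exact ((measurable_snd measurableSet_Iic).inter
          ((hAm.comp measurable_fst) (measurableSet_singleton false)))
      · exact ((measurable_snd measurableSet_Iic).inter
          ((hAm.comp measurable_fst) (measurableSet_singleton true)))
    have hmap1 : Measurable (fun p : Ω × ℝ => (A p.1,
        if (p.2 ≤ α ∧ A p.1 = false) ∨ (p.2 ≤ β ∧ A p.1 = true) then true else false)) :=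
      (hAm.comp measurable_fst).prodMk hY'm
    have hmap2 : Measurable (fun ω => (A ω, Y ω)) := hAm.prodMk hYm
    rw [Measure.ext_iff_singleton]
    rintro ⟨a, b⟩
    rw [Measure.map_apply hmap1 (measurableSet_singleton _),
      Measure.map_apply hmap2 (measurableSet_singleton _)]
    have main : ∀ (a : Bool) (γ : ℝ), 0 ≤ γ → γ ≤ 1 →
        γ = (μ[|A ⁻¹' {a}] (Y ⁻¹' {true})).toReal →
        (∀ z : ℝ, ((z ≤ α ∧ a = false) ∨ (z ≤ β ∧ a = true)) ↔ z ≤ γ) →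
        μ (A ⁻¹' {a}) ≠ 0 →
        ∀ b : Bool,
          (μ.prod (volume.restrict (Set.Ioo (0:ℝ) 1)))
            ((fun p : Ω × ℝ => (A p.1,
              if (p.2 ≤ α ∧ A p.1 = false) ∨ (p.2 ≤ β ∧ A p.1 = true) then true else false))
              ⁻¹' {(a, b)})
            = μ ((fun ω => (A ω, Y ω)) ⁻¹' {(a, b)}) := by
      intro a γ hγ0 hγ1 hγ hiff ha0 b
      have hma : MeasurableSet (A ⁻¹' {a}) := hAm (measurableSet_singleton a)
      haveI : IsProbabilityMeasure (μ[|A ⁻¹' {a}]) := cond_isProbabilityMeasure ha0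
      have hR : (fun ω => (A ω, Y ω)) ⁻¹' {(a, b)} = A ⁻¹' {a} ∩ Y ⁻¹' {b} := by
        ext ω; simp [Prod.ext_iff]
      rcases b with _ | _
      · -- b = false
        have hL : (fun p : Ω × ℝ => (A p.1,
            if (p.2 ≤ α ∧ A p.1 = false) ∨ (p.2 ≤ β ∧ A p.1 = true) then true else false))
            ⁻¹' {(a, false)} = (A ⁻¹' {a}) ×ˢ Set.Ioi γ := by
          ext ⟨ω, z⟩
          simp only [Set.mem_preimage, Set.mem_singleton_iff, Prod.mk.injEq, Set.mem_prod,
            Set.mem_Ioi]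
          constructor
          · rintro ⟨h1, h2⟩
            rw [h1] at h2
            refine ⟨h1, not_le.1 fun hle => ?_⟩
            rw [if_pos ((hiff z).2 hle)] at h2
            exact absurd h2 (by simp)
          · rintro ⟨h1, h2⟩
            refine ⟨h1, ?_⟩
            rw [h1, if_neg (fun hc => absurd ((hiff z).1 hc) (not_le.2 h2))]
        have hI : Set.Ioi γ ∩ Set.Ioo (0:ℝ) 1 = Set.Ioc γ 1 ∩ Set.Ioo (0:ℝ) 1 := by
          ext z
          simp only [Set.mem_inter_iff, Set.mem_Ioi, Set.mem_Ioo, Set.mem_Ioc]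
          constructor
          · rintro ⟨h1, h2, h3⟩; exact ⟨⟨h1, h3.le⟩, h2, h3⟩
          · rintro ⟨⟨h1, _⟩, h2, h3⟩; exact ⟨h1, h2, h3⟩
        rw [hL, Measure.prod_prod, Measure.restrict_apply measurableSet_Ioi, hI,
          vol_Ioc_inter γ 1 hγ0 le_rfl, hR, measure_inter_eq μ hma ha0]
        congr 1
        have hc : Y ⁻¹' {false} = (Y ⁻¹' {true})ᶜ := by ext ω; simp
        rw [hc, prob_compl_eq_one_sub (hYm (measurableSet_singleton true)),
          ENNReal.toReal_sub_of_le prob_le_one ENNReal.one_ne_top, ← hγ]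
        simp
      · -- b = true
        have hL : (fun p : Ω × ℝ => (A p.1,
            if (p.2 ≤ α ∧ A p.1 = false) ∨ (p.2 ≤ β ∧ A p.1 = true) then true else false))
            ⁻¹' {(a, true)} = (A ⁻¹' {a}) ×ˢ Set.Iic γ := by
          ext ⟨ω, z⟩
          simp only [Set.mem_preimage, Set.mem_singleton_iff, Prod.mk.injEq, Set.mem_prod,
            Set.mem_Iic]
          constructor
          · rintro ⟨h1, h2⟩
            rw [h1] at h2
            refine ⟨h1, ?_⟩
            by_cases hc : ((z ≤ α ∧ a = false) ∨ (z ≤ β ∧ a = true))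
            · exact (hiff z).1 hc
            · rw [if_neg hc] at h2; exact absurd h2 (by simp)
          · rintro ⟨h1, h2⟩
            exact ⟨h1, by rw [h1, if_pos ((hiff z).2 h2)]⟩
        have hI : Set.Iic γ ∩ Set.Ioo (0:ℝ) 1 = Set.Ioc 0 γ ∩ Set.Ioo (0:ℝ) 1 := by
          ext z
          simp only [Set.mem_inter_iff, Set.mem_Iic, Set.mem_Ioo, Set.mem_Ioc]
          constructor
          · rintro ⟨h1, h2, h3⟩; exact ⟨⟨h2, h1⟩, h2, h3⟩
          · rintro ⟨⟨_, h1⟩, h2, h3⟩; exact ⟨h1, h2, h3⟩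
        rw [hL, Measure.prod_prod, Measure.restrict_apply measurableSet_Iic, hI,
          vol_Ioc_inter 0 γ le_rfl hγ1, hR, measure_inter_eq μ hma ha0, ← hγ, sub_zero]
    rcases a with _ | _
    · exact main false α hα0 hα1 hα (fun z => by simp) hA0 b
    · exact main true β hβ0 hβ1 hβ (fun z => by simp) hA1 b
  · -- independence
    rw [indepFun_iff_measure_inter_preimage_eq_mul]
    intro s t hs ht
    have h1 : (fun p : Ω × ℝ => p.2) ⁻¹' s ∩ (fun p : Ω × ℝ => A p.1) ⁻¹' t
        = (A ⁻¹' t) ×ˢ s := by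
      ext ⟨ω, z⟩; simp [Set.mem_prod, and_comm]
    have h2 : (fun p : Ω × ℝ => p.2) ⁻¹' s = (Set.univ : Set Ω) ×ˢ s := by
      ext ⟨ω, z⟩; simp
    have h3 : (fun p : Ω × ℝ => A p.1) ⁻¹' t = (A ⁻¹' t) ×ˢ (Set.univ : Set ℝ) := by
      ext ⟨ω, z⟩; simp
    rw [h1, h2, h3, Measure.prod_prod, Measure.prod_prod, Measure.prod_prod,
      measure_univ, measure_univ, one_mul, mul_one, mul_comm]
  · -- conditional entropy computation
    have hs1m : MeasurableSet {p : Ω × ℝ | p.2 ≤ α} :=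
      measurable_snd measurableSet_Iic
    have hs3m : MeasurableSet {p : Ω × ℝ | β < p.2} :=
      measurable_snd measurableSet_Ioi
    have hs2m : MeasurableSet {p : Ω × ℝ | α < p.2 ∧ p.2 ≤ β} :=
      measurable_snd measurableSet_Ioc
    have h1 : entropy ((μ.prod (volume.restrict (Set.Ioo (0:ℝ) 1)))[|{p : Ω × ℝ | p.2 ≤ α}])
        (fun p : Ω × ℝ =>
          if (p.2 ≤ α ∧ A p.1 = false) ∨ (p.2 ≤ β ∧ A p.1 = true) then true else false) = 0 := by
      apply entropy_cond_const _ hs1m _ true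
      rintro ⟨ω, z⟩ hz
      refine if_pos ?_
      rcases hA : A ω with _ | _
      · exact Or.inl ⟨hz, rfl⟩
      · exact Or.inr ⟨le_trans hz hαβ, rfl⟩
    have h3 : entropy ((μ.prod (volume.restrict (Set.Ioo (0:ℝ) 1)))[|{p : Ω × ℝ | β < p.2}])
        (fun p : Ω × ℝ =>
          if (p.2 ≤ α ∧ A p.1 = false) ∨ (p.2 ≤ β ∧ A p.1 = true) then true else false) = 0 := by
      apply entropy_cond_const _ hs3m _ false
      rintro ⟨ω, z⟩ hz
      refine if_neg ?_
      rintro (⟨hz1, _⟩ | ⟨hz2, _⟩)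
      · exact absurd hz1 (not_le.2 (lt_of_le_of_lt hαβ hz))
      · exact absurd hz2 (not_le.2 hz)
    have hs2 : {p : Ω × ℝ | α < p.2 ∧ p.2 ≤ β} = (Set.univ : Set Ω) ×ˢ Set.Ioc α β := by
      ext ⟨ω, z⟩; simp [Set.mem_Ioc]
    have hw2 : (μ.prod (volume.restrict (Set.Ioo (0:ℝ) 1))) {p : Ω × ℝ | α < p.2 ∧ p.2 ≤ β}
        = ENNReal.ofReal (β - α) := by
      rw [hs2, Measure.prod_prod, measure_univ, one_mul,
        Measure.restrict_apply measurableSet_Ioc, vol_Ioc_inter α β hα0 hβ1]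
    rw [h1, h3, mul_zero, mul_zero, add_zero, zero_add, hw2,
      ENNReal.toReal_ofReal (sub_nonneg.2 hαβ)]
    rcases eq_or_lt_of_le hαβ with he | hlt
    · rw [← he, sub_self, zero_mul, zero_mul]
    · have hne : ENNReal.ofReal (β - α) ≠ 0 := by
        rw [Ne, ENNReal.ofReal_eq_zero, not_le]
        exact sub_pos.2 hlt
      congr 1
      have hby : ∀ x : Bool, {p : Ω × ℝ | α < p.2 ∧ p.2 ≤ β} ∩
          ((fun p : Ω × ℝ =>
            if (p.2 ≤ α ∧ A p.1 = false) ∨ (p.2 ≤ β ∧ A p.1 = true) then true else false)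
            ⁻¹' {x}) = (A ⁻¹' {x}) ×ˢ Set.Ioc α β := by
        intro x
        ext ⟨ω, z⟩
        simp only [Set.mem_inter_iff, Set.mem_setOf_eq, Set.mem_preimage,
          Set.mem_singleton_iff, Set.mem_prod, Set.mem_Ioc]
        constructor
        · rintro ⟨⟨hz1, hz2⟩, hx⟩
          refine ⟨?_, hz1, hz2⟩
          rcases hA : A ω with _ | _
          · rw [if_neg ?_] at hx
            · exact hx
            · rintro (⟨hzα, _⟩ | ⟨_, hA1⟩)
              · exact absurd hzα (not_le.2 hz1)
              · rw [hA] at hA1; exact absurd hA1 (by simp)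
          · rw [if_pos (Or.inr ⟨hz2, hA⟩)] at hx
            exact hx
        · rintro ⟨hx, hz1, hz2⟩
          refine ⟨⟨hz1, hz2⟩, ?_⟩
          rcases x with _ | _
          · rw [if_neg ?_]
            rintro (⟨hzα, _⟩ | ⟨_, hA1⟩)
            · exact absurd hzα (not_le.2 hz1)
            · rw [hx] at hA1; exact absurd hA1 (by simp)
          · rw [if_pos (Or.inr ⟨hz2, hx⟩)]
      have hcond : ∀ x : Bool,
          (μ.prod (volume.restrict (Set.Ioo (0:ℝ) 1)))[|{p : Ω × ℝ | α < p.2 ∧ p.2 ≤ β}]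
            ((fun p : Ω × ℝ =>
              if (p.2 ≤ α ∧ A p.1 = false) ∨ (p.2 ≤ β ∧ A p.1 = true) then true else false)
              ⁻¹' {x}) = μ (A ⁻¹' {x}) := by
        intro x
        rw [cond_apply hs2m, hby x, Measure.prod_prod,
          Measure.restrict_apply measurableSet_Ioc, vol_Ioc_inter α β hα0 hβ1, hw2,
          mul_comm (μ (A ⁻¹' {x})) _, ← mul_assoc,
          ENNReal.inv_mul_cancel hne ENNReal.ofReal_ne_top, one_mul]
      unfold entropy
      exact Finset.sum_congr rfl (fun x _ => by rw [hcond x])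
  · rw [delta, ← hα, ← hβ, abs_sub_comm, abs_of_nonneg (sub_nonneg.2 hαβ)]
end
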